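/- For all x ∈ ℂ^d and all α, ω ∈ [d]_0, one has (F_d(x ∘ S_ω conj(x)))_α = (1/d) e^{2πiωα/d} (F_d((F_d x) ∘ S_{-α} conj(F_d x)))_ω. -/

import Mathlib

open Complex BigOperators Finset

/-- Discrete Fourier transform on `ℂ^d` (indexed by `ZMod d`). -/
noncomputable def dftV (d : ℕ) [NeZero d] (x : ZMod d → ℂ) : ZMod d → ℂ :=
  fun k => ∑ n : ZMod d, x n *
    Complex.exp (-2 * Real.pi * Complex.I * (n.val : ℂ) * (k.val : ℂ) / (d : ℂ))

/-- Circular shift: `(S_ℓ x)_n = x_{n+ℓ}`. -/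
def shiftV {d : ℕ} (ℓ : ZMod d) (x : ZMod d → ℂ) : ZMod d → ℂ := fun n => x (n + ℓ)

/-- Reversal: `(R x)_n = x_{-n}`. -/
def revV {d : ℕ} (x : ZMod d → ℂ) : ZMod d → ℂ := fun n => x (-n)

/-- Componentwise complex conjugation. -/
def conjV {d : ℕ} (x : ZMod d → ℂ) : ZMod d → ℂ := fun n => (starRingEnd ℂ) (x n)

/-- Hadamard (componentwise) product. -/
def hadV {d : ℕ} (x y : ZMod d → ℂ) : ZMod d → ℂ := fun n => x n * y n

/-- Circular convolution. -/
noncomputable def convV (d : ℕ) [NeZero d] (x y : ZMod d → ℂ) : ZMod d → ℂ :=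
  fun ℓ => ∑ n : ZMod d, x n * y (ℓ - n)

/-- Modulation: `(W_ℓ x)_n = x_n e^{2πiℓn/d}`. -/
noncomputable def modV {d : ℕ} (ℓ : ZMod d) (x : ZMod d → ℂ) : ZMod d → ℂ :=
  fun n => x n * Complex.exp (2 * Real.pi * Complex.I * (ℓ.val : ℂ) * (n.val : ℂ) / (d : ℂ))

noncomputable def EV (d : ℕ) [NeZero d] : ZMod d → ℂ := fun a => ZMod.stdAddChar a

lemma EV_add {d : ℕ} [NeZero d] (a b : ZMod d) : EV d (a + b) = EV d a * EV d b := by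
  simp [EV, AddChar.map_add_eq_mul]

lemma EV_neg_exp {d : ℕ} [NeZero d] (n k : ZMod d) :
    Complex.exp (-2 * Real.pi * Complex.I * (n.val : ℂ) * (k.val : ℂ) / (d : ℂ)) =
      EV d (-(n * k)) := by
  have h : -(n * k) = ((-(n.val * k.val : ℤ) : ℤ) : ZMod d) := by
    push_cast; ring_nf; simp [ZMod.natCast_val, ZMod.cast_id]
  rw [EV, h, ZMod.stdAddChar_coe]
  push_cast
  ring_nf

lemma EV_pos_exp {d : ℕ} [NeZero d] (n k : ZMod d) :
    Complex.exp (2 * Real.pi * Complex.I * (n.val : ℂ) * (k.val : ℂ) / (d : ℂ)) =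
      EV d (n * k) := by
  have h : n * k = (((n.val * k.val : ℤ) : ℤ) : ZMod d) := by
    push_cast; simp [ZMod.natCast_val, ZMod.cast_id]
  rw [EV, h, ZMod.stdAddChar_coe]
  push_cast
  ring_nf

lemma EV_conj {d : ℕ} [NeZero d] (a : ZMod d) :
    (starRingEnd ℂ) (EV d a) = EV d (-a) := by
  rw [EV, EV, ZMod.stdAddChar_apply, ZMod.stdAddChar_apply, AddChar.map_neg_eq_inv,
    Circle.coe_inv_eq_conj]

lemma EV_sum {d : ℕ} [NeZero d] (b : ZMod d) :
    ∑ k : ZMod d, EV d (k * b) = if b = 0 then (d : ℂ) else 0 := by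
  have := AddChar.sum_mulShift b (ZMod.isPrimitive_stdAddChar d)
  simpa [EV, ZMod.card] using this

/-- index-swap identity for the Fourier transform of `x ∘ S_ω conj(x)`. -/
theorem fourier_index_swap (d : ℕ) [NeZero d] (x : ZMod d → ℂ) (α ω : ZMod d) :
    dftV d (hadV x (shiftV ω (conjV x))) α =
      (1 / (d : ℂ)) *
        Complex.exp (2 * Real.pi * Complex.I * (ω.val : ℂ) * (α.val : ℂ) / (d : ℂ)) *
        dftV d (hadV (dftV d x) (shiftV (-α) (conjV (dftV d x)))) ω := by
  have hd : (d : ℂ) ≠ 0 := Nat.cast_ne_zero.mpr (NeZero.ne d)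
  have hL : dftV d (hadV x (shiftV ω (conjV x))) α =
      ∑ n : ZMod d, x n * (starRingEnd ℂ) (x (n + ω)) * EV d (-(n * α)) := by
    simp only [dftV, hadV, shiftV, conjV, EV_neg_exp]
  have hInner : dftV d (hadV (dftV d x) (shiftV (-α) (conjV (dftV d x)))) ω =
      ∑ k : ZMod d, ∑ n : ZMod d, ∑ m : ZMod d,
        x n * (starRingEnd ℂ) (x m) * EV d (-(m * α)) * EV d (k * (m - n - ω)) := by
    simp only [dftV, hadV, shiftV, conjV, EV_neg_exp]
    refine Finset.sum_congr rfl fun k _ => ?_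
    rw [map_sum, Finset.sum_mul_sum, Finset.sum_mul]
    refine Finset.sum_congr rfl fun n _ => ?_
    rw [Finset.sum_mul]
    refine Finset.sum_congr rfl fun m _ => ?_
    rw [map_mul, EV_conj, neg_neg]
    have harg : -(n * k) + m * (k + -α) + -(k * ω) = -(m * α) + k * (m - n - ω) := by ring
    calc x n * EV d (-(n * k)) * ((starRingEnd ℂ) (x m) * EV d (m * (k + -α))) *
          EV d (-(k * ω))
        = x n * (starRingEnd ℂ) (x m) *
            (EV d (-(n * k)) * EV d (m * (k + -α)) * EV d (-(k * ω))) := by ring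
      _ = x n * (starRingEnd ℂ) (x m) * EV d (-(n * k) + m * (k + -α) + -(k * ω)) := by
            rw [← EV_add, ← EV_add]
      _ = x n * (starRingEnd ℂ) (x m) * EV d (-(m * α) + k * (m - n - ω)) := by rw [harg]
      _ = x n * (starRingEnd ℂ) (x m) * (EV d (-(m * α)) * EV d (k * (m - n - ω))) := by
            rw [EV_add]
      _ = x n * (starRingEnd ℂ) (x m) * EV d (-(m * α)) * EV d (k * (m - n - ω)) := by ring
  rw [hL, hInner]
  rw [Finset.sum_comm]
  have hswap : ∀ n : ZMod d,
      ∑ k : ZMod d, ∑ m : ZMod d,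
        x n * (starRingEnd ℂ) (x m) * EV d (-(m * α)) * EV d (k * (m - n - ω))
      = x n * (starRingEnd ℂ) (x (n + ω)) * EV d (-((n + ω) * α)) * d := by
    intro n
    rw [Finset.sum_comm]
    have hk : ∀ m : ZMod d,
        ∑ k : ZMod d, x n * (starRingEnd ℂ) (x m) * EV d (-(m * α)) * EV d (k * (m - n - ω))
        = x n * (starRingEnd ℂ) (x m) * EV d (-(m * α)) *
            (if m = n + ω then (d : ℂ) else 0) := by
      intro m
      rw [← Finset.mul_sum, EV_sum]
      congr 1
      simp [sub_sub, sub_eq_zero]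
    simp only [hk, mul_ite, mul_zero]
    rw [Finset.sum_ite_eq' Finset.univ (n + ω)
      (fun m => x n * (starRingEnd ℂ) (x m) * EV d (-(m * α)) * d)]
    simp
  simp only [hswap]
  rw [EV_pos_exp ω α, Finset.mul_sum]
  refine Finset.sum_congr rfl fun n _ => ?_
  have e1 : EV d (ω * α) * EV d (-((n + ω) * α)) = EV d (-(n * α)) := by
    rw [← EV_add]; congr 1; ring
  calc x n * (starRingEnd ℂ) (x (n + ω)) * EV d (-(n * α))
      = x n * (starRingEnd ℂ) (x (n + ω)) *
          (EV d (ω * α) * EV d (-((n + ω) * α))) := by rw [e1]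
    _ = 1 / (d : ℂ) * EV d (ω * α) *
          (x n * (starRingEnd ℂ) (x (n + ω)) * EV d (-((n + ω) * α)) * (d : ℂ)) := by
        field_simp
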